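/- If (a_n) is a sequence of complex numbers such that Σ_{n≥1} n^2 |a_n|^2 r^{2n} ≤ r^2/(1-r^2)^2 for all 0 < r < 1, then Σ_{n≥1} n |a_n|^2 r^n ≤ r/(1-r) for all 0 < r < 1. -/

import Mathlib

open MeasureTheory intervalIntegral Set Filter

theorem integrate_coefficient_bound (a : ℕ → ℂ)
    (h : ∀ r : ℝ, 0 < r → r < 1 →
      ∑' n : ℕ, (n : ℝ) ^ 2 * ‖a n‖ ^ 2 * r ^ (2 * n) ≤ r ^ 2 / (1 - r ^ 2) ^ 2) :
    ∀ r : ℝ, 0 < r → r < 1 →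
      ∑' n : ℕ, (n : ℝ) * ‖a n‖ ^ 2 * r ^ n ≤ r / (1 - r) := by
  intro r hr0 hr1
  have h1r : (0:ℝ) < 1 - r := by linarith
  have hgoal_nonneg : (0:ℝ) ≤ r / (1 - r) := by positivity
  by_cases hs : Summable (fun n : ℕ => (n : ℝ) * ‖a n‖ ^ 2 * r ^ n)
  swap
  · rw [tsum_eq_zero_of_not_summable hs]; exact hgoal_nonneg
  -- Clean form of the hypothesis at radius t ∈ (0,1): tsum bound after √ substitution
  have hclean : ∀ t : ℝ, 0 < t → t < 1 →
      ∑' n : ℕ, (n : ℝ) ^ 2 * ‖a n‖ ^ 2 * t ^ n ≤ t / (1 - t) ^ 2 := by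
    intro t ht0 ht1
    have hst0 : 0 < Real.sqrt t := Real.sqrt_pos.mpr ht0
    have hst1 : Real.sqrt t < 1 := by
      rw [show (1:ℝ) = Real.sqrt 1 by simp]
      exact Real.sqrt_lt_sqrt ht0.le ht1
    have := h (Real.sqrt t) hst0 hst1
    simpa only [pow_mul, Real.sq_sqrt ht0.le] using this
  -- finite sum bound at radii t ∈ (0, r), using summability transferred from hs
  have hb : ∀ t : ℝ, 0 < t → t < r → ∀ F : Finset ℕ,
      ∑ n ∈ F, (n : ℝ) ^ 2 * ‖a n‖ ^ 2 * t ^ n ≤ t / (1 - t) ^ 2 := by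
    intro t ht0 htr F
    have htr' : t / r < 1 := (div_lt_one hr0).mpr htr
    have htr0 : 0 ≤ t / r := by positivity
    obtain ⟨C, hC⟩ := (tendsto_self_mul_const_pow_of_lt_one htr0 htr').bddAbove_range
    have hsum : Summable (fun n : ℕ => (n : ℝ) ^ 2 * ‖a n‖ ^ 2 * t ^ n) := by
      apply Summable.of_nonneg_of_le (fun n => by positivity)
        (fun n => ?_) (hs.mul_left C)
      have hn : (n : ℝ) * (t / r) ^ n ≤ C := hC (Set.mem_range_self n)
      have ht : t ^ n = r ^ n * (t / r) ^ n := by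
        rw [div_pow, mul_comm, div_mul_cancel₀ _ (pow_pos hr0 n).ne']
      calc (n : ℝ) ^ 2 * ‖a n‖ ^ 2 * t ^ n
          = ((n : ℝ) * (t / r) ^ n) * ((n : ℝ) * ‖a n‖ ^ 2 * r ^ n) := by
            rw [ht]; ring
        _ ≤ C * ((n : ℝ) * ‖a n‖ ^ 2 * r ^ n) := by
            apply mul_le_mul_of_nonneg_right hn (by positivity)
    exact le_trans (Summable.sum_le_tsum F (fun n _ => by positivity) hsum)
      (hclean t ht0 (htr.trans hr1))
  -- now the finite-sum version of the goal, by integration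
  refine tsum_le_of_sum_le' hgoal_nonneg (fun F => ?_)
  set g : ℝ → ℝ := fun t => ∑ n ∈ F, (n : ℝ) * ‖a n‖ ^ 2 * ((n : ℝ) * t ^ (n - 1)) with hg
  have hG : ∀ t : ℝ, HasDerivAt (fun t : ℝ => ∑ n ∈ F, (n : ℝ) * ‖a n‖ ^ 2 * t ^ n) (g t) t := by
    intro t
    exact HasDerivAt.fun_sum (fun n _ => (hasDerivAt_pow n t).const_mul ((n : ℝ) * ‖a n‖ ^ 2))
  have hgcont : Continuous g := by
    apply continuous_finset_sum
    intro n _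
    exact continuous_const.mul (continuous_const.mul (continuous_pow (n-1)))
  have hint : ∫ t in (0:ℝ)..r, g t = ∑ n ∈ F, (n : ℝ) * ‖a n‖ ^ 2 * r ^ n := by
    rw [intervalIntegral.integral_eq_sub_of_hasDerivAt (fun t _ => hG t)
      (hgcont.intervalIntegrable 0 r)]
    simp only [sub_eq_self]
    apply Finset.sum_eq_zero
    intro n _
    rcases n with _ | m
    · simp
    · simp [zero_pow (Nat.succ_ne_zero m)]
  have hbound : ∀ t ∈ Ioo (0:ℝ) r, g t ≤ 1 / (1 - t) ^ 2 := by
    intro t ht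
    have ht0 : 0 < t := ht.1
    have h1t : (0:ℝ) < 1 - t := by linarith [ht.2, hr1]
    have key : g t * t = ∑ n ∈ F, (n : ℝ) ^ 2 * ‖a n‖ ^ 2 * t ^ n := by
      rw [hg, Finset.sum_mul]
      apply Finset.sum_congr rfl
      intro n _
      rcases n with _ | m
      · simp
      · simp only [Nat.add_sub_cancel, pow_succ]
        push_cast
        ring
    have := (hb t ht0 ht.2 F)
    rw [← key] at this
    rw [show (1:ℝ) / (1 - t) ^ 2 = (t / (1 - t) ^ 2) / t by field_simp]
    rw [le_div_iff₀ ht0]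
    exact this
  have hrint : IntervalIntegrable (fun t : ℝ => 1 / (1 - t) ^ 2) volume 0 r := by
    apply ContinuousOn.intervalIntegrable
    apply ContinuousOn.div continuousOn_const
    · exact (continuousOn_const.sub continuousOn_id).pow 2
    · intro t ht
      rw [Set.uIcc_of_le hr0.le] at ht
      exact pow_ne_zero 2 (by linarith [ht.2] : (1:ℝ) - t ≠ 0)
  have hmono : ∫ t in (0:ℝ)..r, g t ≤ ∫ t in (0:ℝ)..r, 1 / (1 - t) ^ 2 := by
    apply intervalIntegral.integral_mono_ae_restrict hr0.le
      (hgcont.intervalIntegrable 0 r) hrint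
    have hnull : volume ({0, r} : Set ℝ) = 0 :=
      ((Set.finite_singleton r).insert 0).measure_zero volume
    rw [EventuallyLE, ae_restrict_iff' measurableSet_Icc]
    filter_upwards [measure_eq_zero_iff_ae_notMem.mp hnull] with t htne htmem
    have ht0 : 0 < t := lt_of_le_of_ne htmem.1 (by
      intro hh
      exact htne (by simp [← hh]))
    have htr : t < r := lt_of_le_of_ne htmem.2 (by
      intro hh
      exact htne (by simp [hh]))
    exact hbound t ⟨ht0, htr⟩
  have hRHS : ∫ t in (0:ℝ)..r, 1 / (1 - t) ^ 2 = r / (1 - r) := by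
    have hder : ∀ t ∈ Set.uIcc (0:ℝ) r, HasDerivAt (fun t : ℝ => (1 - t)⁻¹) (1 / (1 - t) ^ 2) t := by
      intro t ht
      rw [Set.uIcc_of_le hr0.le] at ht
      have h1t : (1:ℝ) - t ≠ 0 := by
        have : t ≤ r := ht.2
        have : (0:ℝ) < 1 - t := by linarith
        linarith
      have := ((hasDerivAt_id t).const_sub 1).inv h1t
      refine this.congr_deriv ?_
      simp
    rw [intervalIntegral.integral_eq_sub_of_hasDerivAt hder hrint]
    rw [sub_zero, inv_one]
    field_simp
    ring
  rw [← hint]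
  rw [hRHS] at hmono
  exact hmono
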